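/- For any a > 0 there exist constants c₁, c₂, c₃, c₄ > 0 such that for all g ≥ 1, R > 0, t > 0: ∫₀^{t/2} exp(-a(s·g + R²/s))·s^{-1} ds ≥ c₁·exp(-c₂·R²/t) when t ≤ 4R/√g, and ∫₀^{t/2} exp(-a(s·g + R²/s))·s^{-1} ds ≥ c₃·exp(-c₄·R·√g) when t > 4R/√g. -/

import Mathlib

open MeasureTheory Set

lemma key_bound (a : ℝ) (ha : 0 < a) (g R t α β : ℝ) (hg : 1 ≤ g) (hR : 0 < R)
    (hα : 0 < α) (hαβ : α < β) (hβ : β ≤ t / 2) (M : ℝ)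
    (hM : ∀ s ∈ Set.Icc α β, a * (s * g + R ^ 2 / s) ≤ M) :
    (β - α) / β * Real.exp (-M) ≤
      ∫ s in Set.Ioc (0:ℝ) (t / 2), Real.exp (-a * (s * g + R ^ 2 / s)) * s⁻¹ := by
  set f : ℝ → ℝ := fun s => Real.exp (-a * (s * g + R ^ 2 / s)) * s⁻¹ with hf
  have hmeas : AEStronglyMeasurable f volume := by
    apply Measurable.aestronglyMeasurable
    fun_prop
  have hbd : ∀ s ∈ Set.Ioc (0:ℝ) (t/2), ‖f s‖ ≤ (a * R ^ 2)⁻¹ := by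
    intro s hs
    have hs0 : 0 < s := hs.1
    have hfnn : 0 ≤ f s := by positivity
    rw [Real.norm_of_nonneg hfnn]
    have h1 : Real.exp (-a * (s * g + R ^ 2 / s)) ≤ Real.exp (-(a * R ^ 2 / s)) := by
      apply Real.exp_le_exp.mpr
      have h0 : 0 ≤ a * (s * g) := by positivity
      have : -a * (s * g + R ^ 2 / s) = -(a * (s * g)) - a * R ^ 2 / s := by ring
      linarith [this.le]
    have h2 : Real.exp (-(a * R ^ 2 / s)) ≤ s / (a * R ^ 2) := by
      have hx : 0 < a * R ^ 2 / s := by positivity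
      have := Real.add_one_le_exp (a * R ^ 2 / s)
      have hle : a * R ^ 2 / s ≤ Real.exp (a * R ^ 2 / s) := by linarith
      rw [Real.exp_neg]
      rw [inv_le_comm₀ (Real.exp_pos _) (by positivity)]
      calc (s / (a * R ^ 2))⁻¹ = a * R ^ 2 / s := by rw [inv_div]
        _ ≤ Real.exp (a * R ^ 2 / s) := hle
    calc f s ≤ (s / (a * R ^ 2)) * s⁻¹ := by
          apply mul_le_mul_of_nonneg_right (h1.trans h2) (by positivity)
      _ = (a * R ^ 2)⁻¹ := by field_simp
  have hint : IntegrableOn f (Set.Ioc (0:ℝ) (t/2)) volume := by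
    refine Measure.integrableOn_of_bounded (M := (a * R ^ 2)⁻¹) ?_ hmeas ?_
    · simp [Real.volume_Ioc]
    · filter_upwards [ae_restrict_mem measurableSet_Ioc] with s hs using hbd s hs
  have hsub : Set.Ioc α β ⊆ Set.Ioc 0 (t/2) :=
    Set.Ioc_subset_Ioc hα.le hβ
  have hstep1 : ∫ s in Set.Ioc α β, f s ≤ ∫ s in Set.Ioc (0:ℝ) (t/2), f s := by
    apply setIntegral_mono_set hint
    · filter_upwards [ae_restrict_mem measurableSet_Ioc] with s hs
      have : 0 < s := hs.1
      positivity
    · exact HasSubset.Subset.eventuallyLE hsub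
  have hstep2 : Real.exp (-M) * β⁻¹ * (volume (Set.Ioc α β)).toReal ≤ ∫ s in Set.Ioc α β, f s := by
    apply setIntegral_ge_of_const_le_real measurableSet_Ioc
    · simp [Real.volume_Ioc]
    · intro s hs
      have hs1 : α ≤ s := hs.1.le
      have hs2 : s ≤ β := hs.2
      have hs0 : 0 < s := lt_of_lt_of_le hα hs1
      have hβ0 : 0 < β := hα.trans hαβ
      have e1 : Real.exp (-M) ≤ Real.exp (-a * (s * g + R ^ 2 / s)) := by
        apply Real.exp_le_exp.mpr
        have := hM s ⟨hs1, hs2⟩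
        linarith
      have e2 : β⁻¹ ≤ s⁻¹ := inv_anti₀ hs0 hs2
      calc Real.exp (-M) * β⁻¹ ≤ Real.exp (-a * (s * g + R ^ 2 / s)) * s⁻¹ :=
            mul_le_mul e1 e2 (by positivity) (Real.exp_pos _).le
        _ = f s := rfl
    · exact hint.mono_set hsub
  have hvol : (volume (Set.Ioc α β)).toReal = β - α := by
    rw [Real.volume_Ioc, ENNReal.toReal_ofReal (by linarith)]
  rw [hvol] at hstep2
  have hβ0 : 0 < β := hα.trans hαβ
  have heq : (β - α) / β * Real.exp (-M) = Real.exp (-M) * β⁻¹ * (β - α) := by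
    field_simp
  rw [heq]
  exact hstep2.trans hstep1

theorem lower_integral_bound (a : ℝ) (ha : 0 < a) :
    ∃ c₁ c₂ c₃ c₄ : ℝ, 0 < c₁ ∧ 0 < c₂ ∧ 0 < c₃ ∧ 0 < c₄ ∧
      ∀ g R t : ℝ, 1 ≤ g → 0 < R → 0 < t →
        (t ≤ 4 * R / Real.sqrt g →
          c₁ * Real.exp (-c₂ * R ^ 2 / t) ≤
            ∫ s in Set.Ioc (0:ℝ) (t / 2),
              Real.exp (-a * (s * g + R ^ 2 / s)) * s⁻¹) ∧
        (t > 4 * R / Real.sqrt g →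
          c₃ * Real.exp (-c₄ * (R * Real.sqrt g)) ≤
            ∫ s in Set.Ioc (0:ℝ) (t / 2),
              Real.exp (-a * (s * g + R ^ 2 / s)) * s⁻¹) := by
  refine ⟨1/2, 12*a, 1/2, 3*a, by norm_num, by positivity, by norm_num, by positivity, ?_⟩
  intro g R t hg hR ht
  have hsg : 0 < Real.sqrt g := Real.sqrt_pos.mpr (by linarith)
  have hgsq : Real.sqrt g * Real.sqrt g = g := Real.mul_self_sqrt (by linarith)
  constructor
  · intro hle
    have htg : t * Real.sqrt g ≤ 4 * R := by
      rw [le_div_iff₀ hsg] at hle; linarith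
    have hg16 : t ^ 2 * g ≤ 16 * R ^ 2 := by
      nlinarith [mul_le_mul htg htg (by positivity : (0:ℝ) ≤ t * Real.sqrt g) (by linarith)]
    have key := key_bound a ha g R t (t/4) (t/2) hg hR (by linarith) (by linarith) le_rfl
      (12 * a * R ^ 2 / t) ?_
    · have h12 : (t/2 - t/4) / (t/2) = 1/2 := by
        rw [div_eq_div_iff (by linarith) (by norm_num)]; ring
      have he : -(12*a) * R ^ 2 / t = -(12 * a * R ^ 2 / t) := by ring
      rw [he]
      rw [h12] at key
      exact key
    · intro s hs
      have hs1 : t/4 ≤ s := hs.1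
      have hs2 : s ≤ t/2 := hs.2
      have hs0 : 0 < s := by linarith
      have b1 : s * g ≤ 8 * R ^ 2 / t := by
        rw [le_div_iff₀ ht]
        have hgt0 : (0:ℝ) ≤ g * t := by positivity
        nlinarith [mul_le_mul_of_nonneg_right hs2 hgt0]
      have b2 : R ^ 2 / s ≤ 4 * R ^ 2 / t := by
        rw [div_le_div_iff₀ hs0 ht]
        nlinarith [mul_nonneg (sq_nonneg R) (by linarith : (0:ℝ) ≤ 4*s - t)]
      have hsum : s * g + R ^ 2 / s ≤ 12 * R ^ 2 / t := by
        have : 8 * R ^ 2 / t + 4 * R ^ 2 / t = 12 * R ^ 2 / t := by ring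
        linarith
      have h := mul_le_mul_of_nonneg_left hsum ha.le
      have he2 : a * (12 * R ^ 2 / t) = 12 * a * R ^ 2 / t := by ring
      linarith
  · intro hgt
    have h2R : 2 * R / Real.sqrt g ≤ t / 2 := by
      rw [div_le_div_iff₀ hsg (by norm_num)]
      rw [gt_iff_lt, div_lt_iff₀ hsg] at hgt
      linarith
    have key := key_bound a ha g R t (R / Real.sqrt g) (2 * R / Real.sqrt g) hg hR
      (by positivity) (by rw [div_lt_div_iff₀ hsg hsg]; nlinarith) h2R
      (3 * a * (R * Real.sqrt g)) ?_
    · have h12 : (2 * R / Real.sqrt g - R / Real.sqrt g) / (2 * R / Real.sqrt g) = 1/2 := by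
        rw [div_eq_div_iff (by positivity) (by norm_num)]
        field_simp
        ring
      have he : -(3*a) * (R * Real.sqrt g) = -(3 * a * (R * Real.sqrt g)) := by ring
      rw [he]
      rw [h12] at key
      exact key
    · intro s hs
      have hs1 : R / Real.sqrt g ≤ s := hs.1
      have hs2 : s ≤ 2 * R / Real.sqrt g := hs.2
      have hs0 : 0 < s := lt_of_lt_of_le (by positivity) hs1
      rw [div_le_iff₀ hsg] at hs1
      rw [le_div_iff₀ hsg] at hs2
      have b1 : s * g ≤ 2 * R * Real.sqrt g := by
        have h := mul_le_mul_of_nonneg_right hs2 hsg.le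
        have : s * g = s * Real.sqrt g * Real.sqrt g := by rw [mul_assoc, hgsq]
        linarith
      have b2 : R ^ 2 / s ≤ R * Real.sqrt g := by
        rw [div_le_iff₀ hs0]
        nlinarith [mul_le_mul_of_nonneg_left hs1 hR.le]
      have hsum : s * g + R ^ 2 / s ≤ 3 * (R * Real.sqrt g) := by linarith
      have h := mul_le_mul_of_nonneg_left hsum ha.le
      have he2 : a * (3 * (R * Real.sqrt g)) = 3 * a * (R * Real.sqrt g) := by ring
      linarith
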